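/- arXiv:1201.5513 — 8 statements merged into one kernel-verified Lean document; each statement's English description precedes it below -/
import Mathlib

section
/- Any laminar family of subsets of a finite set C (i.e., any two members are either disjoint or one contains the other) verifies the Consecutive Ones Property. -/
variable {C : Type*} [Fintype C] [DecidableEq C]

/-- A family `R` of subsets of the finite set `C` verifies the Consecutive Ones Property:
there is a bijection `σ : C ≃ Fin |C|` under which every member of `R` is an interval. -/
def IsC1P (R : Finset (Finset C)) : Prop :=
  ∃ σ : C ≃ Fin (Fintype.card C),
    ∀ r ∈ R, ∃ a b : ℕ, ∀ x : C, x ∈ r ↔ a ≤ (σ x : ℕ) ∧ (σ x : ℕ) ≤ b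

/-- A Minimal Conflicting Set: nonempty, not C1P, but every proper subfamily is C1P. -/
def IsMCS (S : Finset (Finset C)) : Prop :=
  S.Nonempty ∧ ¬ IsC1P S ∧ ∀ T ⊂ S, IsC1P T

/-- Two sets overlap. -/
def Overlap (X Y : Finset C) : Prop :=
  (X ∩ Y).Nonempty ∧ (X \ Y).Nonempty ∧ (Y \ X).Nonempty

noncomputable def wgt (R : Finset (Finset C)) (s : Finset C) : ℕ :=
  s.card * R.card + (if h : s ∈ R then ((R.equivFin ⟨s, h⟩ : Fin R.card) : ℕ) else 0)

lemma wgt_idx_lt {R : Finset (Finset C)} {s : Finset C} (hs : s ∈ R) :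
    (if h : s ∈ R then ((R.equivFin ⟨s, h⟩ : Fin R.card) : ℕ) else 0) < R.card := by
  rw [dif_pos hs]; exact (R.equivFin ⟨s, hs⟩).isLt

lemma wgt_lt {R : Finset (Finset C)} {s t : Finset C} (hs : s ∈ R) (ht : t ∈ R)
    (hc : s.card < t.card) : wgt R s < wgt R t := by
  have h1 := wgt_idx_lt hs
  have h2 : s.card + 1 ≤ t.card := hc
  have h3 : (s.card + 1) * R.card ≤ t.card * R.card := Nat.mul_le_mul_right _ h2
  unfold wgt
  nlinarith [Nat.zero_le (if h : t ∈ R then ((R.equivFin ⟨t, h⟩ : Fin R.card) : ℕ) else 0)]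

lemma wgt_inj {R : Finset (Finset C)} {s t : Finset C} (hs : s ∈ R) (ht : t ∈ R)
    (hw : wgt R s = wgt R t) : s = t := by
  rcases lt_trichotomy s.card t.card with hc | hc | hc
  · exact absurd hw (wgt_lt hs ht hc).ne
  · have h1 := wgt_idx_lt hs
    have h2 := wgt_idx_lt ht
    unfold wgt at hw
    rw [hc] at hw
    have hidx : (if h : s ∈ R then ((R.equivFin ⟨s, h⟩ : Fin R.card) : ℕ) else 0)
        = (if h : t ∈ R then ((R.equivFin ⟨t, h⟩ : Fin R.card) : ℕ) else 0) := by omega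
    rw [dif_pos hs, dif_pos ht] at hidx
    have := R.equivFin.injective (Fin.ext hidx)
    exact Subtype.ext_iff.1 this
  · exact absurd hw.symm (wgt_lt ht hs hc).ne

lemma card_le_of_wgt_lt {R : Finset (Finset C)} {s t : Finset C} (hs : s ∈ R) (ht : t ∈ R)
    (hw : wgt R s < wgt R t) : s.card ≤ t.card := by
  by_contra hc
  exact absurd (wgt_lt ht hs (by omega)) (by omega)

/-- For a heavier set `s`, membership agrees on all elements of `r`. -/
lemma mem_agree {R : Finset (Finset C)}
    (h : ∀ r ∈ R, ∀ s ∈ R, r ∩ s = ∅ ∨ r ⊆ s ∨ s ⊆ r)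
    {r s : Finset C} (hr : r ∈ R) (hs : s ∈ R) (hw : wgt R r < wgt R s)
    {u v : C} (hu : u ∈ r) (hv : v ∈ r) : (u ∈ s ↔ v ∈ s) := by
  have hcard : r.card ≤ s.card := card_le_of_wgt_lt hr hs hw
  rcases h r hr s hs with hd | hsub | hsub
  · constructor <;> intro hx
    · exact absurd (Finset.mem_inter.2 ⟨hu, hx⟩) (by simp [hd])
    · exact absurd (Finset.mem_inter.2 ⟨hv, hx⟩) (by simp [hd])
  · exact ⟨fun _ => hsub hv, fun _ => hsub hu⟩
  · have : s = r := Finset.eq_of_subset_of_card_le hsub hcard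
    subst this
    exact absurd hw (lt_irrefl _)

noncomputable def nval (R : Finset (Finset C)) (x : C) : ℕ :=
  ∑ s ∈ R, if x ∈ s then 0 else 2 ^ wgt R s

noncomputable def hiv (R : Finset (Finset C)) (r : Finset C) (x : C) : ℕ :=
  ∑ s ∈ (R.erase r).filter (fun s => wgt R r < wgt R s), if x ∈ s then 0 else 2 ^ wgt R s

noncomputable def lov (R : Finset (Finset C)) (r : Finset C) (x : C) : ℕ :=
  ∑ s ∈ (R.erase r).filter (fun s => ¬ wgt R r < wgt R s), if x ∈ s then 0 else 2 ^ wgt R s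

lemma nval_split {R : Finset (Finset C)} {r : Finset C} (hr : r ∈ R) (x : C) :
    nval R x = (if x ∈ r then 0 else 2 ^ wgt R r) + hiv R r x + lov R r x := by
  unfold nval hiv lov
  rw [← Finset.add_sum_erase R _ hr, ← Finset.sum_filter_add_sum_filter_not (R.erase r)
    (fun s => wgt R r < wgt R s)]
  ring

lemma sum_two_pow_range (m : ℕ) : ∑ i ∈ Finset.range m, 2 ^ i = 2 ^ m - 1 := by
  induction m with
  | zero => simp
  | succ k ih =>
    rw [Finset.sum_range_succ, ih, pow_succ]
    have : 1 ≤ 2 ^ k := Nat.one_le_two_pow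
    omega

lemma lov_lt {R : Finset (Finset C)} {r : Finset C} (hr : r ∈ R) (x : C) :
    lov R r x < 2 ^ wgt R r := by
  set T := (R.erase r).filter (fun s => ¬ wgt R r < wgt R s) with hT
  have hmem : ∀ s ∈ T, wgt R s < wgt R r := by
    intro s hs
    rw [hT, Finset.mem_filter, Finset.mem_erase] at hs
    obtain ⟨⟨hne, hsR⟩, hnlt⟩ := hs
    rcases lt_or_eq_of_le (not_lt.1 hnlt) with h' | h'
    · exact h'
    · exact absurd (wgt_inj hsR hr h') hne
  have step1 : lov R r x ≤ ∑ s ∈ T, 2 ^ wgt R s := by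
    apply Finset.sum_le_sum
    intro s _
    split <;> simp
  have hinjT : ∀ a ∈ T, ∀ b ∈ T, wgt R a = wgt R b → a = b := by
    intro a ha b hb hab
    rw [hT, Finset.mem_filter, Finset.mem_erase] at ha hb
    exact wgt_inj ha.1.2 hb.1.2 hab
  have step2 : ∑ s ∈ T, 2 ^ wgt R s = ∑ j ∈ T.image (wgt R), 2 ^ j :=
    (Finset.sum_image hinjT).symm
  have hsub : T.image (wgt R) ⊆ Finset.range (wgt R r) := by
    intro j hj
    rw [Finset.mem_image] at hj
    obtain ⟨s, hs, rfl⟩ := hj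
    exact Finset.mem_range.2 (hmem s hs)
  have step3 : ∑ j ∈ T.image (wgt R), 2 ^ j ≤ ∑ j ∈ Finset.range (wgt R r), 2 ^ j :=
    Finset.sum_le_sum_of_subset hsub
  rw [sum_two_pow_range] at step3
  have : 1 ≤ 2 ^ wgt R r := Nat.one_le_two_pow
  omega

lemma hiv_dvd {R : Finset (Finset C)} (r : Finset C) (x : C) :
    2 ^ (wgt R r + 1) ∣ hiv R r x := by
  apply Finset.dvd_sum
  intro s hs
  rw [Finset.mem_filter] at hs
  split
  · exact dvd_zero _
  · exact pow_dvd_pow 2 hs.2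

lemma hiv_congr {R : Finset (Finset C)}
    (h : ∀ r ∈ R, ∀ s ∈ R, r ∩ s = ∅ ∨ r ⊆ s ∨ s ⊆ r)
    {r : Finset C} (hr : r ∈ R) {u v : C} (hu : u ∈ r) (hv : v ∈ r) :
    hiv R r u = hiv R r v := by
  apply Finset.sum_congr rfl
  intro s hs
  rw [Finset.mem_filter, Finset.mem_erase] at hs
  have := mem_agree h hr hs.1.2 hs.2 hu hv
  simp only [this]

lemma nval_convex {R : Finset (Finset C)}
    (h : ∀ r ∈ R, ∀ s ∈ R, r ∩ s = ∅ ∨ r ⊆ s ∨ s ⊆ r)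
    {r : Finset C} (hr : r ∈ R) {u v y : C} (hu : u ∈ r) (hv : v ∈ r)
    (h1 : nval R u ≤ nval R y) (h2 : nval R y ≤ nval R v) : y ∈ r := by
  by_contra hy
  have su := nval_split hr u
  have sv := nval_split hr v
  have sy := nval_split hr y
  rw [if_pos hu] at su
  rw [if_pos hv] at sv
  rw [if_neg hy] at sy
  have hH : hiv R r u = hiv R r v := hiv_congr h hr hu hv
  have hLu := lov_lt hr u
  have hLv := lov_lt hr v
  have hLy := lov_lt hr y
  set P := 2 ^ wgt R r with hP
  have hP1 : 1 ≤ P := Nat.one_le_two_pow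
  obtain ⟨k1, hk1⟩ := hiv_dvd (R := R) r u
  obtain ⟨k2, hk2⟩ := hiv_dvd (R := R) r y
  rw [pow_succ, ← hP] at hk1 hk2
  rcases le_or_gt (hiv R r u) (hiv R r y) with hcase | hcase
  · omega
  · have hk : k2 < k1 := by
      rcases Nat.lt_or_ge k2 k1 with h' | h'
      · exact h'
      · exfalso
        have : P * 2 * k1 ≤ P * 2 * k2 := Nat.mul_le_mul_left _ h'
        omega
    have hmul : P * 2 * (k2 + 1) ≤ P * 2 * k1 := Nat.mul_le_mul_left _ hk
    have hexp : P * 2 * (k2 + 1) = P * 2 * k2 + P * 2 := by ring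
    omega

theorem c1p_of_laminar (R : Finset (Finset C))
    (h : ∀ r ∈ R, ∀ s ∈ R, r ∩ s = ∅ ∨ r ⊆ s ∨ s ⊆ r) :
    IsC1P R := by
  classical
  set N := Fintype.card C with hN
  let e0 : C ≃ Fin N := Fintype.equivFin C
  let key : C → ℕ := fun x => nval R x * N + (e0 x : ℕ)
  have hval : ∀ x : C, (e0 x : ℕ) < N := fun x => (e0 x).isLt
  have hkey_n : ∀ a b : C, key a ≤ key b → nval R a ≤ nval R b := by
    intro a b hab
    by_contra hn
    push_neg at hn
    have h1 : nval R b + 1 ≤ nval R a := hn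
    have h2 : (nval R b + 1) * N ≤ nval R a * N := Nat.mul_le_mul_right _ h1
    have := hval a
    have := hval b
    simp only [key] at hab
    nlinarith
  have hkey_inj : Function.Injective key := by
    intro a b hab
    simp only [key] at hab
    have ha := hval a
    have hb := hval b
    have hn : nval R a = nval R b := by
      rcases lt_trichotomy (nval R a) (nval R b) with hc | hc | hc
      · nlinarith [Nat.mul_le_mul_right N (Nat.succ_le_of_lt hc)]
      · exact hc
      · nlinarith [Nat.mul_le_mul_right N (Nat.succ_le_of_lt hc)]
    have he : (e0 a : ℕ) = (e0 b : ℕ) := by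
      rw [hn] at hab; omega
    exact e0.injective (Fin.ext he)
  letI : LinearOrder C := LinearOrder.lift' key hkey_inj
  have hle : ∀ a b : C, a ≤ b ↔ key a ≤ key b := fun a b => Iff.rfl
  let σo : Fin N ≃o C := Fintype.orderIsoFinOfCardEq C hN.symm
  refine ⟨σo.toEquiv.symm, ?_⟩
  intro r hrR
  rcases Finset.eq_empty_or_nonempty r with rfl | hne
  · exact ⟨1, 0, by intro x; simp; omega⟩
  · set f : C → ℕ := fun x => ((σo.toEquiv.symm x : Fin N) : ℕ) with hf
    have hmono : ∀ a b : C, a ≤ b ↔ f a ≤ f b := by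
      intro a b
      constructor
      · intro hab
        have : σo.symm a ≤ σo.symm b := σo.symm.monotone hab
        exact this
      · intro hab
        have : σo.symm a ≤ σo.symm b := hab
        have := σo.monotone this
        simpa using this
    obtain ⟨xa, hxa, hxamin⟩ := Finset.exists_min_image r f hne
    obtain ⟨xb, hxb, hxbmax⟩ := Finset.exists_max_image r f hne
    refine ⟨f xa, f xb, ?_⟩
    intro x
    constructor
    · intro hx
      exact ⟨hxamin x hx, hxbmax x hx⟩
    · rintro ⟨h1, h2⟩
      have ha : xa ≤ x := (hmono xa x).2 h1
      have hb : x ≤ xb := (hmono x xb).2 h2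
      exact nval_convex h hrR hxa hxb (hkey_n _ _ ((hle xa x).1 ha)) (hkey_n _ _ ((hle x xb).1 hb))
end

section
/- In any Minimal Conflicting Set of size 3, the three rows pairwise intersect (each pair has nonempty intersection). -/
variable {C : Type*} [Fintype C] [DecidableEq C]

lemma c1p_of_three (r s t : Finset C) (hdisj : ∀ x, ¬(x ∈ r ∧ x ∈ s))
    (S : Finset (Finset C)) (hS : ∀ u ∈ S, u = r ∨ u = s ∨ u = t) : IsC1P S := by
  classical
  set n := Fintype.card C with hn
  let e : C ≃ Fin n := Fintype.equivFin C
  let w : C → ℕ := fun x =>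
    if x ∈ r then (if x ∈ t then 1 else 0)
    else if x ∈ t then (if x ∈ s then 3 else 2)
    else if x ∈ s then 4 else 5
  have hrw : ∀ x, x ∈ r ↔ 0 ≤ w x ∧ w x ≤ 1 := by
    intro x; have := hdisj x; simp only [w]; split_ifs <;> simp_all
  have hsw : ∀ x, x ∈ s ↔ 3 ≤ w x ∧ w x ≤ 4 := by
    intro x; have := hdisj x; simp only [w]; split_ifs <;> simp_all
  have htw : ∀ x, x ∈ t ↔ 1 ≤ w x ∧ w x ≤ 3 := by
    intro x; have := hdisj x; simp only [w]; split_ifs <;> simp_all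
  let k : C → ℕ := fun x => n * w x + (e x : ℕ)
  have hen : ∀ x : C, (e x : ℕ) < n := fun x => (e x).2
  have hnpos : ∀ x : C, 0 < n := fun x => Nat.pos_of_ne_zero (by
    intro h0; exact absurd (hen x) (by omega))
  have hkinj : Function.Injective k := by
    intro x y hxy
    have hx := hen x; have hy := hen y
    have hw : w x = w y := by
      have h1 : k x / n = w x := by
        simp only [k]; rw [Nat.mul_add_div (hnpos x), Nat.div_eq_of_lt (hen x)]; omega
      have h2 : k y / n = w y := by
        simp only [k]; rw [Nat.mul_add_div (hnpos x), Nat.div_eq_of_lt (hen y)]; omega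
      rw [← h1, ← h2, hxy]
    simp only [k] at hxy
    rw [hw] at hxy
    have : (e x : ℕ) = (e y : ℕ) := by omega
    exact e.injective (Fin.ext this)
  have hwmono : ∀ x z : C, k x ≤ k z → w x ≤ w z := by
    intro x z hxz
    by_contra hlt
    push_neg at hlt
    have h2 : n * (w z + 1) ≤ n * w x := Nat.mul_le_mul_left n hlt
    have h3 : n * (w z + 1) = n * w z + n := by ring
    have := hen z; have := hen x
    simp only [k] at hxz
    omega
  let fs : Finset ℕ := Finset.univ.image k
  have hfscard : fs.card = n := by
    rw [Finset.card_image_of_injective _ hkinj, Finset.card_univ]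
  let iso := fs.orderIsoOfFin hfscard
  have hmem : ∀ x : C, k x ∈ fs := fun x => Finset.mem_image_of_mem k (Finset.mem_univ x)
  let f : C → Fin n := fun x => iso.symm ⟨k x, hmem x⟩
  have hfinj : Function.Injective f := by
    intro x y hxy
    have := iso.symm.injective hxy
    exact hkinj (Subtype.ext_iff.mp this)
  have hfsurj : Function.Surjective f := by
    intro i
    have : (iso i : ℕ) ∈ fs := (iso i).2
    obtain ⟨x, -, hx⟩ := Finset.mem_image.mp this
    refine ⟨x, ?_⟩
    simp only [f]
    rw [show (⟨k x, hmem x⟩ : fs) = iso i from Subtype.ext hx]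
    exact iso.symm_apply_apply i
  let σ : C ≃ Fin n := Equiv.ofBijective f ⟨hfinj, hfsurj⟩
  have hσiff : ∀ x y : C, σ x ≤ σ y ↔ k x ≤ k y := by
    intro x y
    have hio : iso (σ x) ≤ iso (σ y) ↔ σ x ≤ σ y := iso.le_iff_le
    rw [← hio]
    show iso (iso.symm _) ≤ iso (iso.symm _) ↔ _
    rw [iso.apply_symm_apply, iso.apply_symm_apply]
    rfl
  refine ⟨σ, ?_⟩
  have key : ∀ (u : Finset C) (lo hi : ℕ), (∀ x, x ∈ u ↔ lo ≤ w x ∧ w x ≤ hi) →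
      ∃ a b : ℕ, ∀ x : C, x ∈ u ↔ a ≤ (σ x : ℕ) ∧ (σ x : ℕ) ≤ b := by
    intro u lo hi hu
    rcases u.eq_empty_or_nonempty with hemp | hne
    · exact ⟨1, 0, fun x => by simp [hemp]; omega⟩
    · set img : Finset ℕ := u.image (fun x => (σ x : ℕ)) with himg
      have hne' : img.Nonempty := hne.image _
      refine ⟨img.min' hne', img.max' hne', fun x => ?_⟩
      constructor
      · intro hx
        refine ⟨Finset.min'_le img _ ?_, Finset.le_max' img _ ?_⟩ <;>
          exact Finset.mem_image_of_mem _ hx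
      · rintro ⟨ha, hb⟩
        obtain ⟨xa, hxa, hxa'⟩ := Finset.mem_image.mp (Finset.min'_mem _ hne')
        obtain ⟨xb, hxb, hxb'⟩ := Finset.mem_image.mp (Finset.max'_mem _ hne')
        have h1 : σ xa ≤ σ x := by rw [Fin.le_def]; omega
        have h2 : σ x ≤ σ xb := by rw [Fin.le_def]; omega
        have w1 : w xa ≤ w x := hwmono _ _ ((hσiff _ _).mp h1)
        have w2 : w x ≤ w xb := hwmono _ _ ((hσiff _ _).mp h2)
        have := (hu xa).mp hxa
        have := (hu xb).mp hxb
        exact (hu x).mpr (by omega)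
  intro u hu
  rcases hS u hu with rfl | rfl | rfl
  · exact key u 0 1 hrw
  · exact key u 3 4 hsw
  · exact key u 1 3 htw

theorem mcs_three_pairwise_intersect (S : Finset (Finset C)) (h : IsMCS S)
    (hcard : S.card = 3) :
    ∀ r ∈ S, ∀ s ∈ S, r ≠ s → (r ∩ s).Nonempty := by
  intro r hr s hs hrs
  by_contra hne
  rw [Finset.not_nonempty_iff_eq_empty] at hne
  have hdisj : ∀ x, ¬(x ∈ r ∧ x ∈ s) := by
    intro x hx
    have : x ∈ r ∩ s := Finset.mem_inter.mpr hx
    simp [hne] at this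
  -- find the third element t
  have h1 : ((S.erase r).erase s).card = 1 := by
    rw [Finset.card_erase_of_mem (Finset.mem_erase.mpr ⟨Ne.symm hrs, hs⟩),
        Finset.card_erase_of_mem hr, hcard]
  obtain ⟨t, ht⟩ := Finset.card_eq_one.mp h1
  have hS : ∀ u ∈ S, u = r ∨ u = s ∨ u = t := by
    intro u hu
    by_cases h1' : u = r
    · exact Or.inl h1'
    by_cases h2' : u = s
    · exact Or.inr (Or.inl h2')
    right; right
    have : u ∈ (S.erase r).erase s :=
      Finset.mem_erase.mpr ⟨h2', Finset.mem_erase.mpr ⟨h1', hu⟩⟩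
    rw [ht] at this
    exact Finset.mem_singleton.mp this
  exact h.2.1 (c1p_of_three r s t hdisj S hS)
end

section
/- Let A, B, C be three subsets of a finite set such that each pair overlaps (nonempty intersection and nonempty differences in both directions) and each of A \ (B ∪ C), B \ (A ∪ C), C \ (A ∪ B) is nonempty. Then the family {A, B, C} does not verify the C1P. -/
variable {C : Type*} [Fintype C] [DecidableEq C]

theorem formIV_size3_not_c1p (A B c : Finset C)
    (hAB : Overlap A B) (hBC : Overlap B c) (hAC : Overlap A c)
    (hA : (A \ (B ∪ c)).Nonempty) (hB : (B \ (A ∪ c)).Nonempty)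
    (hC : (c \ (A ∪ B)).Nonempty) :
    ¬ IsC1P {A, B, c} := by
  rintro ⟨σ, h⟩
  obtain ⟨lA, rA, hIA⟩ := h A (by simp)
  obtain ⟨lB, rB, hIB⟩ := h B (by simp)
  obtain ⟨lC, rC, hIC⟩ := h c (by simp)
  obtain ⟨pA, hpA⟩ := hA
  obtain ⟨pB, hpB⟩ := hB
  obtain ⟨pC, hpC⟩ := hC
  obtain ⟨iAB, hiAB⟩ := hAB.1
  obtain ⟨iBC, hiBC⟩ := hBC.1
  obtain ⟨iAC, hiAC⟩ := hAC.1
  simp only [Finset.mem_sdiff, Finset.mem_union, Finset.mem_inter, not_or] at hpA hpB hpC hiAB hiBC hiAC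
  have h1 := (hIA pA).mp hpA.1
  have h2 : ¬(lB ≤ (σ pA:ℕ) ∧ (σ pA:ℕ) ≤ rB) := fun hh => hpA.2.1 ((hIB pA).mpr hh)
  have h3 : ¬(lC ≤ (σ pA:ℕ) ∧ (σ pA:ℕ) ≤ rC) := fun hh => hpA.2.2 ((hIC pA).mpr hh)
  have h4 := (hIB pB).mp hpB.1
  have h5 : ¬(lA ≤ (σ pB:ℕ) ∧ (σ pB:ℕ) ≤ rA) := fun hh => hpB.2.1 ((hIA pB).mpr hh)
  have h6 : ¬(lC ≤ (σ pB:ℕ) ∧ (σ pB:ℕ) ≤ rC) := fun hh => hpB.2.2 ((hIC pB).mpr hh)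
  have h7 := (hIC pC).mp hpC.1
  have h8 : ¬(lA ≤ (σ pC:ℕ) ∧ (σ pC:ℕ) ≤ rA) := fun hh => hpC.2.1 ((hIA pC).mpr hh)
  have h9 : ¬(lB ≤ (σ pC:ℕ) ∧ (σ pC:ℕ) ≤ rB) := fun hh => hpC.2.2 ((hIB pC).mpr hh)
  have h10 := (hIA iAB).mp hiAB.1
  have h11 := (hIB iAB).mp hiAB.2
  have h12 := (hIB iBC).mp hiBC.1
  have h13 := (hIC iBC).mp hiBC.2
  have h14 := (hIA iAC).mp hiAC.1
  have h15 := (hIC iAC).mp hiAC.2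
  omega
end

section
/- Let A, B, C be three subsets of a finite set such that each pair overlaps and each of (A ∩ B) \ C, (B ∩ C) \ A, (A ∩ C) \ B is nonempty. Then the family {A, B, C} does not verify the C1P. -/
variable {C : Type*} [Fintype C] [DecidableEq C]

theorem formV_size3_not_c1p (A B c : Finset C)
    (hAB : Overlap A B) (hBC : Overlap B c) (hAC : Overlap A c)
    (h1 : ((A ∩ B) \ c).Nonempty) (h2 : ((B ∩ c) \ A).Nonempty)
    (h3 : ((A ∩ c) \ B).Nonempty) :
    ¬ IsC1P {A, B, c} := by
  rintro ⟨σ, hσ⟩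
  obtain ⟨aA, bA, hA⟩ := hσ A (by simp)
  obtain ⟨aB, bB, hB⟩ := hσ B (by simp)
  obtain ⟨aC, bC, hC⟩ := hσ c (by simp)
  obtain ⟨p, hp⟩ := h1
  obtain ⟨q, hq⟩ := h2
  obtain ⟨r, hr⟩ := h3
  simp only [Finset.mem_sdiff, Finset.mem_inter] at hp hq hr
  have h1A := (hA p).mp hp.1.1
  have h1B := (hB p).mp hp.1.2
  have h1C : ¬(aC ≤ (σ p : ℕ) ∧ (σ p : ℕ) ≤ bC) := fun h => hp.2 ((hC p).mpr h)
  have h2B := (hB q).mp hq.1.1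
  have h2C := (hC q).mp hq.1.2
  have h2A : ¬(aA ≤ (σ q : ℕ) ∧ (σ q : ℕ) ≤ bA) := fun h => hq.2 ((hA q).mpr h)
  have h3A := (hA r).mp hr.1.1
  have h3C := (hC r).mp hr.1.2
  have h3B : ¬(aB ≤ (σ r : ℕ) ∧ (σ r : ℕ) ≤ bB) := fun h => hr.2 ((hB r).mpr h)
  omega
end

section
/- Let A, B, C be three subsets of a finite set such that each pair overlaps, each of A \ (B ∪ C), B \ (A ∪ C), C \ (A ∪ B) is nonempty. Then {A, B, C} is a Minimal Conflicting Set. -/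
variable {C : Type*} [Fintype C] [DecidableEq C]

set_option linter.unusedSectionVars false

-- downward closed subsets of Fin n
lemma dc_iff {n : ℕ} (s : Finset (Fin n))
    (h : ∀ i ∈ s, ∀ j, j ≤ i → j ∈ s) :
    ∀ i : Fin n, i ∈ s ↔ (i : ℕ) < s.card := by
  intro i
  constructor
  · intro hi
    have hsub : Finset.Iic i ⊆ s := fun j hj => h i hi j (Finset.mem_Iic.mp hj)
    have := Finset.card_le_card hsub
    have hc : (Finset.Iic i).card = (i : ℕ) + 1 := by
      simp [Fin.card_Iic]
    omega
  · intro hi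
    by_contra hni
    have hsub : s ⊆ Finset.Iio i := by
      intro j hj
      rw [Finset.mem_Iio]
      by_contra hlt
      exact hni (h j hj i (le_of_not_gt hlt))
    have := Finset.card_le_card hsub
    have hc : (Finset.Iio i).card = (i : ℕ) := by simp [Fin.card_Iio]
    omega

lemma exists_mono (k : C → ℕ) :
    ∃ σ : C ≃ Fin (Fintype.card C), ∀ x y : C, σ x ≤ σ y → k x ≤ k y := by
  classical
  let e := Fintype.equivFin C
  letI : LinearOrder C := LinearOrder.lift' (fun x => toLex ((k x, e x)))
    (fun x y hxy => e.injective (congrArg Prod.snd (toLex.injective hxy)))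
  have hcard : Finset.univ.card = Fintype.card C := Finset.card_univ
  let iso := Finset.univ.orderIsoOfFin hcard
  refine ⟨⟨fun x => iso.symm ⟨x, Finset.mem_univ x⟩, fun i => (iso i : C),
    fun x => by simp, fun i => by simp⟩, ?_⟩
  intro x y hxy
  have h2 : (⟨x, Finset.mem_univ x⟩ : {z // z ∈ Finset.univ}) ≤ ⟨y, Finset.mem_univ y⟩ :=
    iso.symm.le_iff_le.mp hxy
  have hle : toLex ((k x, e x)) ≤ toLex ((k y, e y)) := h2
  rcases Prod.Lex.le_iff.mp hle with h | h
  · exact le_of_lt h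
  · exact le_of_eq h.1

lemma interval_of_mono (σ : C ≃ Fin (Fintype.card C)) (k : C → ℕ)
    (hmono : ∀ x y : C, σ x ≤ σ y → k x ≤ k y) (t1 t2 : ℕ) :
    ∃ a b : ℕ, ∀ x : C, (t1 ≤ k x ∧ k x ≤ t2) ↔ a ≤ (σ x : ℕ) ∧ (σ x : ℕ) ≤ b := by
  classical
  set s1 : Finset (Fin (Fintype.card C)) :=
    Finset.univ.filter (fun i => k (σ.symm i) < t1) with hs1
  set s2 : Finset (Fin (Fintype.card C)) :=
    Finset.univ.filter (fun i => k (σ.symm i) ≤ t2) with hs2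
  have hd1 : ∀ i ∈ s1, ∀ j, j ≤ i → j ∈ s1 := by
    intro i hi j hji
    simp only [hs1, Finset.mem_filter, Finset.mem_univ, true_and] at hi ⊢
    have := hmono (σ.symm j) (σ.symm i) (by simpa using hji)
    omega
  have hd2 : ∀ i ∈ s2, ∀ j, j ≤ i → j ∈ s2 := by
    intro i hi j hji
    simp only [hs2, Finset.mem_filter, Finset.mem_univ, true_and] at hi ⊢
    have := hmono (σ.symm j) (σ.symm i) (by simpa using hji)
    omega
  have h1 := dc_iff s1 hd1
  have h2 := dc_iff s2 hd2
  have key1 : ∀ x : C, k x < t1 ↔ (σ x : ℕ) < s1.card := by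
    intro x
    have := h1 (σ x)
    simpa [hs1, Finset.mem_filter] using this
  have key2 : ∀ x : C, k x ≤ t2 ↔ (σ x : ℕ) < s2.card := by
    intro x
    have := h2 (σ x)
    simpa [hs2, Finset.mem_filter] using this
  rcases Nat.eq_zero_or_pos s2.card with hz | hp
  · refine ⟨1, 0, fun x => ?_⟩
    have := key2 x
    omega
  · refine ⟨s1.card, s2.card - 1, fun x => ?_⟩
    have := key1 x
    have := key2 x
    omega

lemma pair_c1p (X Y : Finset C) : IsC1P ({X, Y} : Finset (Finset C)) := by
  classical
  set k : C → ℕ := fun x =>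
    if x ∈ X then (if x ∈ Y then 1 else 0) else (if x ∈ Y then 2 else 3) with hk
  obtain ⟨σ, hσ⟩ := exists_mono k
  refine ⟨σ, ?_⟩
  intro r hr
  have hX : ∀ x : C, x ∈ X ↔ (0 ≤ k x ∧ k x ≤ 1) := by
    intro x; by_cases h1 : x ∈ X <;> by_cases h2 : x ∈ Y <;> simp [hk, h1, h2]
  have hY : ∀ x : C, x ∈ Y ↔ (1 ≤ k x ∧ k x ≤ 2) := by
    intro x; by_cases h1 : x ∈ X <;> by_cases h2 : x ∈ Y <;> simp [hk, h1, h2]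
  rcases Finset.mem_insert.mp hr with h | h
  · obtain ⟨a, b, hab⟩ := interval_of_mono σ k hσ 0 1
    exact ⟨a, b, fun x => by rw [h, hX x, hab x]⟩
  · obtain ⟨a, b, hab⟩ := interval_of_mono σ k hσ 1 2
    rw [Finset.mem_singleton] at h
    exact ⟨a, b, fun x => by rw [h, hY x, hab x]⟩

lemma c1p_mono {T R : Finset (Finset C)} (h : T ⊆ R) (hR : IsC1P R) : IsC1P T := by
  obtain ⟨σ, hσ⟩ := hR
  exact ⟨σ, fun r hr => hσ r (h hr)⟩


theorem formIV_size3_mcs (A B c : Finset C)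
    (hAB : Overlap A B) (hBC : Overlap B c) (hAC : Overlap A c)
    (hA : (A \ (B ∪ c)).Nonempty) (hB : (B \ (A ∪ c)).Nonempty)
    (hC : (c \ (A ∪ B)).Nonempty) :
    IsMCS ({A, B, c} : Finset (Finset C)) := by
  classical
  refine ⟨⟨A, by simp⟩, ?_, ?_⟩
  · rintro ⟨σ, h⟩
    obtain ⟨aA, bA, hIA⟩ := h A (by simp)
    obtain ⟨aB, bB, hIB⟩ := h B (by simp)
    obtain ⟨ac, bc, hIc⟩ := h c (by simp)
    obtain ⟨u, hu⟩ := hAB.1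
    obtain ⟨v, hv⟩ := hBC.1
    obtain ⟨w, hw⟩ := hAC.1
    obtain ⟨pa, hpa⟩ := hA
    obtain ⟨pb, hpb⟩ := hB
    obtain ⟨pc, hpc⟩ := hC
    rw [Finset.mem_inter] at hu hv hw
    rw [Finset.mem_sdiff, Finset.mem_union] at hpa hpb hpc
    push_neg at hpa hpb hpc
    have f1 := (hIA u).mp hu.1
    have f2 := (hIB u).mp hu.2
    have f3 := (hIB v).mp hv.1
    have f4 := (hIc v).mp hv.2
    have f5 := (hIA w).mp hw.1
    have f6 := (hIc w).mp hw.2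
    have f7 := (hIA pa).mp hpa.1
    have f8 : ¬(aB ≤ (σ pa : ℕ) ∧ (σ pa : ℕ) ≤ bB) := fun hh => hpa.2.1 ((hIB pa).mpr hh)
    have f9 : ¬(ac ≤ (σ pa : ℕ) ∧ (σ pa : ℕ) ≤ bc) := fun hh => hpa.2.2 ((hIc pa).mpr hh)
    have f10 := (hIB pb).mp hpb.1
    have f11 : ¬(aA ≤ (σ pb : ℕ) ∧ (σ pb : ℕ) ≤ bA) := fun hh => hpb.2.1 ((hIA pb).mpr hh)
    have f12 : ¬(ac ≤ (σ pb : ℕ) ∧ (σ pb : ℕ) ≤ bc) := fun hh => hpb.2.2 ((hIc pb).mpr hh)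
    have f13 := (hIc pc).mp hpc.1
    have f14 : ¬(aA ≤ (σ pc : ℕ) ∧ (σ pc : ℕ) ≤ bA) := fun hh => hpc.2.1 ((hIA pc).mpr hh)
    have f15 : ¬(aB ≤ (σ pc : ℕ) ∧ (σ pc : ℕ) ≤ bB) := fun hh => hpc.2.2 ((hIB pc).mpr hh)
    omega
  · intro T hT
    obtain ⟨x, hxS, hxT⟩ := Finset.exists_of_ssubset hT
    have hTsub : T ⊆ ({A, B, c} : Finset (Finset C)).erase x := by
      intro y hy
      exact Finset.mem_erase.mpr ⟨fun he => hxT (he ▸ hy), hT.1 hy⟩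
    simp only [Finset.mem_insert, Finset.mem_singleton] at hxS
    rcases hxS with rfl | rfl | rfl
    · refine c1p_mono (hTsub.trans ?_) (pair_c1p B c)
      intro y hy
      have := Finset.mem_erase.mp hy
      simp only [Finset.mem_insert, Finset.mem_singleton] at this ⊢
      tauto
    · refine c1p_mono (hTsub.trans ?_) (pair_c1p A c)
      intro y hy
      have := Finset.mem_erase.mp hy
      simp only [Finset.mem_insert, Finset.mem_singleton] at this ⊢
      tauto
    · refine c1p_mono (hTsub.trans ?_) (pair_c1p A B)
      intro y hy
      have := Finset.mem_erase.mp hy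
      simp only [Finset.mem_insert, Finset.mem_singleton] at this ⊢
      tauto
end

section
/- Let r, A, B, C be subsets of a finite set such that A, B, C are pairwise disjoint and each of A, B, C overlaps r (i.e., for X ∈ {A,B,C}: X ∩ r ≠ ∅, X \ r ≠ ∅ and r \ X ≠ ∅ — in fact X ∩ r ≠ ∅ and X \ r ≠ ∅ suffice). Then the family {r, A, B, C} does not verify the C1P. -/
variable {C : Type*} [Fintype C] [DecidableEq C]

theorem formII_not_c1p (r A B c : Finset C)
    (hAB : A ∩ B = ∅) (hAC : A ∩ c = ∅) (hBC : B ∩ c = ∅)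
    (hA1 : (A ∩ r).Nonempty) (hA2 : (A \ r).Nonempty)
    (hB1 : (B ∩ r).Nonempty) (hB2 : (B \ r).Nonempty)
    (hC1 : (c ∩ r).Nonempty) (hC2 : (c \ r).Nonempty) :
    ¬ IsC1P {r, A, B, c} := by
  rintro ⟨σ, h⟩
  obtain ⟨aR, bR, hr⟩ := h r (by simp)
  obtain ⟨aA, bA, hA⟩ := h A (by simp)
  obtain ⟨aB, bB, hB⟩ := h B (by simp)
  obtain ⟨aC, bC, hC⟩ := h c (by simp)
  obtain ⟨x0, hx0⟩ := id hA1
  rw [Finset.mem_inter] at hx0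
  have hx0r := (hr x0).1 hx0.2
  have hlt : (σ x0 : ℕ) < Fintype.card C := (σ x0).isLt
  have haR : aR < Fintype.card C := by omega
  have hbR : min bR (Fintype.card C - 1) < Fintype.card C := by omega
  let ea : C := σ.symm ⟨aR, haR⟩
  let eb : C := σ.symm ⟨min bR (Fintype.card C - 1), hbR⟩
  have hσa : (σ ea : ℕ) = aR := by simp [ea]
  have hσb : (σ eb : ℕ) = min bR (Fintype.card C - 1) := by simp [eb]
  have key : ∀ (X : Finset C) (aX bX : ℕ),
      (∀ z : C, z ∈ X ↔ aX ≤ (σ z : ℕ) ∧ (σ z : ℕ) ≤ bX) →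
      (X ∩ r).Nonempty → (X \ r).Nonempty → ea ∈ X ∨ eb ∈ X := by
    intro X aX bX hX h1 h2
    obtain ⟨x, hx⟩ := h1
    rw [Finset.mem_inter] at hx
    obtain ⟨y, hy⟩ := h2
    rw [Finset.mem_sdiff] at hy
    have hxX := (hX x).1 hx.1
    have hxr := (hr x).1 hx.2
    have hyX := (hX y).1 hy.1
    have hyr : ¬ (aR ≤ (σ y : ℕ) ∧ (σ y : ℕ) ≤ bR) := fun hh => hy.2 ((hr y).2 hh)
    have hylt : (σ y : ℕ) < Fintype.card C := (σ y).isLt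
    have hxlt : (σ x : ℕ) < Fintype.card C := (σ x).isLt
    rcases Nat.lt_or_ge (σ y : ℕ) aR with hcase | hcase
    · left; exact (hX ea).2 (by rw [hσa]; omega)
    · right; exact (hX eb).2 (by rw [hσb]; omega)
  have hdisj : ∀ {X Y : Finset C}, X ∩ Y = ∅ → ∀ z, z ∈ X → z ∈ Y → False := by
    intro X Y hXY z hzX hzY
    have : z ∈ X ∩ Y := Finset.mem_inter.2 ⟨hzX, hzY⟩
    simp [hXY] at this
  rcases key A aA bA hA hA1 hA2 with h1 | h1 <;>
  rcases key B aB bB hB hB1 hB2 with h2 | h2 <;>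
  rcases key c aC bC hC hC1 hC2 with h3 | h3 <;>
  first
    | exact hdisj hAB ea h1 h2
    | exact hdisj hAB eb h1 h2
    | exact hdisj hAC ea h1 h3
    | exact hdisj hAC eb h1 h3
    | exact hdisj hBC ea h2 h3
    | exact hdisj hBC eb h2 h3
end

section
/- Let k ≥ 4 and let r_0, r_1, …, r_{k-1} be subsets of a finite set C such that r_i ∩ r_{i+1 mod k} ≠ ∅ for all i, and r_i ∩ r_j = ∅ whenever i and j are not cyclically adjacent. Then the family {r_0, …, r_{k-1}} does not verify the C1P. -/
variable {C : Type*} [Fintype C] [DecidableEq C]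

theorem formI_cycle_not_c1p (k : ℕ) (hk : 4 ≤ k) (r : Fin k → Finset C)
    (hadj : ∀ i : Fin k,
      (r i ∩ r ⟨((i : ℕ) + 1) % k, Nat.mod_lt _ (by omega)⟩).Nonempty)
    (hnonadj : ∀ i j : Fin k, (i : ℕ) ≠ (j : ℕ) →
      (j : ℕ) ≠ ((i : ℕ) + 1) % k → (i : ℕ) ≠ ((j : ℕ) + 1) % k →
      r i ∩ r j = ∅) :
    ¬ IsC1P (Finset.univ.image r) := by
  rintro ⟨σ, hσ⟩
  have hne : ∀ i, (r i).Nonempty := by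
    intro i
    obtain ⟨y, hy⟩ := hadj i
    exact ⟨y, (Finset.mem_inter.1 hy).1⟩
  have hneL : ∀ i : Fin k, ((r i).image (fun x => (σ x : ℕ))).Nonempty :=
    fun i => (hne i).image _
  set L : Fin k → ℕ := fun i => ((r i).image (fun x => (σ x : ℕ))).min' (hneL i) with hLdef
  have hLmem : ∀ i, ∃ x ∈ r i, (σ x : ℕ) = L i := by
    intro i
    have h := Finset.min'_mem _ (hneL i)
    rw [Finset.mem_image] at h
    exact h
  have hLle : ∀ i, ∀ x ∈ r i, L i ≤ (σ x : ℕ) := fun i x hx =>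
    Finset.min'_le _ _ (Finset.mem_image_of_mem _ hx)
  have key : ∀ i j : Fin k, L j ≤ L i → (r i ∩ r j).Nonempty →
      ∀ x ∈ r i, (σ x : ℕ) = L i → x ∈ r j := by
    intro i j hle hint x hx hσx
    obtain ⟨a, b, hab⟩ := hσ (r j) (Finset.mem_image_of_mem r (Finset.mem_univ j))
    obtain ⟨y, hy⟩ := hint
    rw [Finset.mem_inter] at hy
    obtain ⟨z, hz, hz'⟩ := hLmem j
    have h1 := (hab z).1 hz
    have h2 := (hab y).1 hy.2
    have h3 := hLle i y hy.1
    exact (hab x).2 ⟨by omega, by omega⟩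
  have : Nonempty (Fin k) := ⟨⟨0, by omega⟩⟩
  obtain ⟨i, hi⟩ := Finite.exists_max L
  set v : ℕ := (i : ℕ) with hv
  have hvk : v < k := i.isLt
  have hqk : (v + 1) % k < k := Nat.mod_lt _ (by omega)
  have hpk : (v + k - 1) % k < k := Nat.mod_lt _ (by omega)
  set nxt : Fin k := ⟨(v + 1) % k, hqk⟩ with hnxt
  set prv : Fin k := ⟨(v + k - 1) % k, hpk⟩ with hprv
  have hq : (v + 1) % k = if v + 1 = k then 0 else v + 1 := by
    split
    · next h => rw [h, Nat.mod_self]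
    · next h => exact Nat.mod_eq_of_lt (by omega)
  have hp : (v + k - 1) % k = if v = 0 then k - 1 else v - 1 := by
    split
    · next h =>
        have h2 : v + k - 1 = k - 1 := by omega
        rw [h2, Nat.mod_eq_of_lt (by omega)]
    · next h =>
        have h2 : v + k - 1 = (v - 1) + k := by omega
        rw [h2, Nat.add_mod_right, Nat.mod_eq_of_lt (by omega)]
  have hps : ((v + k - 1) % k + 1) % k = v := by
    rw [Nat.mod_add_mod]
    have h2 : v + k - 1 + 1 = v + k := by omega
    rw [h2, Nat.add_mod_right, Nat.mod_eq_of_lt hvk]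
  have hqs : ((v + 1) % k + 1) % k = (v + 2) % k := by
    rw [Nat.mod_add_mod]
  have hq2 : (v + 2) % k = if v + 2 = k then 0 else if v + 1 = k then 1 else v + 2 := by
    split
    · next h => rw [h, Nat.mod_self]
    · next h =>
        split
        · next h2 =>
            have h3 : v + 2 = 1 + k := by omega
            rw [h3, Nat.add_mod_right, Nat.mod_eq_of_lt (by omega)]
        · next h2 => exact Nat.mod_eq_of_lt (by omega)
  -- the minimum point of r i
  obtain ⟨x, hx, hσx⟩ := hLmem i
  -- x belongs to the successor
  have hint1 : (r i ∩ r nxt).Nonempty := by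
    have := hadj i
    simpa using this
  have hx1 : x ∈ r nxt := key i nxt (hi nxt) hint1 x hx hσx
  -- x belongs to the predecessor
  have hint2 : (r prv ∩ r i).Nonempty := by
    have h := hadj prv
    have he : (⟨((prv : ℕ) + 1) % k, Nat.mod_lt _ (by omega)⟩ : Fin k) = i := by
      apply Fin.ext
      exact hps
    rwa [he] at h
  have hx2 : x ∈ r prv := by
    refine key i prv (hi prv) ?_ x hx hσx
    rwa [Finset.inter_comm]
  -- prv and nxt are not cyclically adjacent
  have hdisj : r prv ∩ r nxt = ∅ := by
    apply hnonadj prv nxt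
    · show (v + k - 1) % k ≠ (v + 1) % k
      rw [hp, hq]; split_ifs <;> omega
    · show ((nxt : ℕ)) ≠ ((prv : ℕ) + 1) % k
      show (v + 1) % k ≠ ((v + k - 1) % k + 1) % k
      rw [hps, hq]; split_ifs <;> omega
    · show (v + k - 1) % k ≠ ((v + 1) % k + 1) % k
      rw [hqs, hq2, hp]; split_ifs <;> omega
  have : x ∈ r prv ∩ r nxt := Finset.mem_inter.2 ⟨hx2, hx1⟩
  rw [hdisj] at this
  exact absurd this (Finset.notMem_empty x)
end

section
/- For every m ≥ 3 there exists a finite set C and a family R of m subsets of C such that every 3-element subfamily of R is a Minimal Conflicting Set; consequently the number of MCS of R is binomial(m,3), which is Θ(m^3). -/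
variable {C : Type*} [Fintype C] [DecidableEq C]

section Aux

/-- Interval in a monotone sequence. -/
lemma interval_of_monotone {n : ℕ} (g : Fin n → ℕ) (hg : Monotone g) (c d : ℕ) :
    ∃ a b : ℕ, ∀ p : Fin n, (c ≤ g p ∧ g p ≤ d) ↔ (a ≤ (p : ℕ) ∧ (p : ℕ) ≤ b) := by
  classical
  set P := Finset.univ.filter (fun p : Fin n => c ≤ g p ∧ g p ≤ d) with hPdef
  by_cases hP : P.Nonempty
  · refine ⟨(P.min' hP : ℕ), (P.max' hP : ℕ), fun p => ?_⟩
    constructor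
    · intro hp
      have hpP : p ∈ P := by simp [hPdef, hp.1, hp.2]
      exact ⟨Fin.le_def.mp (P.min'_le p hpP), Fin.le_def.mp (P.le_max' p hpP)⟩
    · rintro ⟨h1, h2⟩
      have hmin : P.min' hP ∈ P := P.min'_mem hP
      have hmax : P.max' hP ∈ P := P.max'_mem hP
      simp only [hPdef, Finset.mem_filter] at hmin hmax
      have e1 : g (P.min' hP) ≤ g p := hg (Fin.le_def.mpr h1)
      have e2 : g p ≤ g (P.max' hP) := hg (Fin.le_def.mpr h2)
      exact ⟨le_trans hmin.2.1 e1, le_trans e2 hmax.2.2⟩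
  · refine ⟨1, 0, fun p => ?_⟩
    constructor
    · intro hp
      exact absurd ⟨p, by simp [hPdef, hp.1, hp.2]⟩ hP
    · omega

/-- If all sets in `R` are preimages of intervals under some `f`, then `R` is C1P. -/
lemma isC1P_of_fun {n : ℕ} (R : Finset (Finset (Fin n))) (f : Fin n → ℕ)
    (h : ∀ r ∈ R, ∃ c d : ℕ, ∀ x, x ∈ r ↔ c ≤ f x ∧ f x ≤ d) : IsC1P R := by
  classical
  refine ⟨(Tuple.sort f).symm.trans (finCongr (Fintype.card_fin n).symm), ?_⟩
  intro r hr
  obtain ⟨c, d, hcd⟩ := h r hr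
  obtain ⟨a, b, hab⟩ := interval_of_monotone (f ∘ Tuple.sort f) (Tuple.monotone_sort f) c d
  refine ⟨a, b, fun x => ?_⟩
  have := hab ((Tuple.sort f).symm x)
  simp only [Function.comp_apply, Equiv.apply_symm_apply] at this
  rw [hcd x, this]
  simp

/-- Any family contained in a pair of sets is C1P. -/
lemma isC1P_pair {n : ℕ} (A B : Finset (Fin n)) (T : Finset (Finset (Fin n)))
    (hT : ∀ r ∈ T, r = A ∨ r = B) : IsC1P T := by
  classical
  apply isC1P_of_fun T (fun x => if x ∈ A then (if x ∈ B then 1 else 0) else (if x ∈ B then 2 else 3))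
  intro r hr
  rcases hT r hr with h | h
  · refine ⟨0, 1, fun x => ?_⟩
    rw [h]
    by_cases hA : x ∈ A <;> by_cases hB : x ∈ B <;> simp [hA, hB]
  · refine ⟨1, 2, fun x => ?_⟩
    rw [h]
    by_cases hA : x ∈ A <;> by_cases hB : x ∈ B <;> simp [hA, hB]

lemma isC1P_of_card_le_two {n : ℕ} (T : Finset (Finset (Fin n))) (hT : T.card ≤ 2) :
    IsC1P T := by
  classical
  rcases T.eq_empty_or_nonempty with rfl | ⟨A, hA⟩
  · exact isC1P_pair ∅ ∅ ∅ (by simp)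
  rcases (T.erase A).eq_empty_or_nonempty with he | ⟨B, hB⟩
  · refine isC1P_pair A A T (fun r hr => ?_)
    left
    by_contra hne
    exact absurd (Finset.mem_erase.mpr ⟨hne, hr⟩) (by simp [he])
  · refine isC1P_pair A B T (fun r hr => ?_)
    by_contra hne
    push_neg at hne
    have h3 : ({A, B, r} : Finset (Finset (Fin n))).card = 3 := by
      rw [Finset.card_insert_of_notMem, Finset.card_insert_of_notMem] <;>
        simp [Ne.symm (Finset.ne_of_mem_erase hB), hne.1, hne.2,
          (Finset.ne_of_mem_erase hB), Ne.symm hne.1, Ne.symm hne.2]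
    have hsub : ({A, B, r} : Finset (Finset (Fin n))) ⊆ T := by
      intro x hx
      simp only [Finset.mem_insert, Finset.mem_singleton] at hx
      rcases hx with rfl | rfl | rfl
      exacts [hA, Finset.mem_of_mem_erase hB, hr]
    have := Finset.card_le_card hsub
    omega

end Aux

section Rows

/-- Row `i`: all positions `p` of `Fin (m*m)` whose base-`m` digits include `i`. -/
def Row (m : ℕ) (i : Fin m) : Finset (Fin (m * m)) :=
  Finset.univ.filter fun p => (p : ℕ) / m = (i : ℕ) ∨ (p : ℕ) % m = (i : ℕ)

/-- The element encoding the (ordered) pair `(i,j)`. -/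
def elt {m : ℕ} (i j : Fin m) : Fin (m * m) :=
  ⟨(i : ℕ) * m + (j : ℕ), by
    have hi := i.isLt; have hj := j.isLt; nlinarith⟩

lemma mem_row_elt {m : ℕ} (i j k : Fin m) : elt i j ∈ Row m k ↔ k = i ∨ k = j := by
  have hm : 0 < m := i.pos
  have hj := j.isLt
  have h1 : ((i : ℕ) * m + (j : ℕ)) / m = (i : ℕ) := by
    rw [mul_comm, Nat.mul_add_div hm, Nat.div_eq_of_lt hj, add_zero]
  have h2 : ((i : ℕ) * m + (j : ℕ)) % m = (j : ℕ) := by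
    rw [mul_comm, Nat.mul_add_mod, Nat.mod_eq_of_lt hj]
  simp only [Row, elt, Finset.mem_filter, Finset.mem_univ, true_and, h1, h2]
  rw [Fin.ext_iff, Fin.ext_iff]
  omega

lemma row_injective {m : ℕ} : Function.Injective (Row m) := by
  intro i j hij
  by_contra hne
  have h1 : elt i i ∈ Row m i := (mem_row_elt i i i).mpr (Or.inl rfl)
  rw [hij] at h1
  rcases (mem_row_elt i i j).mp h1 with h | h <;> exact hne h.symm

/-- Triples of distinct rows are not C1P. -/
lemma not_c1p_triple {m : ℕ} (i j k : Fin m) (hij : i ≠ j) (hik : i ≠ k) (hjk : j ≠ k) :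
    ¬ IsC1P ({Row m i, Row m j, Row m k} : Finset (Finset (Fin (m * m)))) := by
  rintro ⟨σ, h⟩
  obtain ⟨ai, bi, hi⟩ := h (Row m i) (by simp)
  obtain ⟨aj, bj, hj⟩ := h (Row m j) (by simp)
  obtain ⟨ak, bk, hk⟩ := h (Row m k) (by simp)
  -- the three pair elements
  have hxij_i := (hi (elt i j)).mp ((mem_row_elt i j i).mpr (Or.inl rfl))
  have hxij_j := (hj (elt i j)).mp ((mem_row_elt i j j).mpr (Or.inr rfl))
  have hxij_k : ¬ (ak ≤ (σ (elt i j) : ℕ) ∧ (σ (elt i j) : ℕ) ≤ bk) := by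
    rw [← hk (elt i j), mem_row_elt]
    rintro (h | h) <;> simp_all
  have hxjk_j := (hj (elt j k)).mp ((mem_row_elt j k j).mpr (Or.inl rfl))
  have hxjk_k := (hk (elt j k)).mp ((mem_row_elt j k k).mpr (Or.inr rfl))
  have hxjk_i : ¬ (ai ≤ (σ (elt j k) : ℕ) ∧ (σ (elt j k) : ℕ) ≤ bi) := by
    rw [← hi (elt j k), mem_row_elt]
    rintro (h | h) <;> simp_all
  have hxik_i := (hi (elt i k)).mp ((mem_row_elt i k i).mpr (Or.inl rfl))
  have hxik_k := (hk (elt i k)).mp ((mem_row_elt i k k).mpr (Or.inr rfl))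
  have hxik_j : ¬ (aj ≤ (σ (elt i k) : ℕ) ∧ (σ (elt i k) : ℕ) ≤ bj) := by
    rw [← hj (elt i k), mem_row_elt]
    rintro (h | h) <;> simp_all
  omega

end Rows

theorem exists_family_all_triples_mcs :
    ∀ m : ℕ, 3 ≤ m →
      ∃ (n : ℕ) (R : Finset (Finset (Fin n))),
        R.card = m ∧ (∀ S ⊆ R, S.card = 3 → IsMCS S) ∧
        Set.ncard {S : Finset (Finset (Fin n)) | S ⊆ R ∧ IsMCS S}
          = m.choose 3 := by
  intro m hm
  have hmcs : ∀ S ⊆ Finset.univ.image (Row m), S.card = 3 → IsMCS S := by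
    intro S hSR hS3
    obtain ⟨A, B, D, hAB, hAD, hBD, rfl⟩ := Finset.card_eq_three.mp hS3
    obtain ⟨i, -, rfl⟩ := Finset.mem_image.mp (hSR (show A ∈ _ by simp))
    obtain ⟨j, -, rfl⟩ := Finset.mem_image.mp (hSR (show B ∈ _ by simp))
    obtain ⟨k, -, rfl⟩ := Finset.mem_image.mp (hSR (show D ∈ _ by simp))
    refine ⟨⟨Row m i, by simp⟩, ?_, ?_⟩
    · exact not_c1p_triple i j k (fun h => hAB (by rw [h])) (fun h => hAD (by rw [h]))
        (fun h => hBD (by rw [h]))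
    · intro T hT
      apply isC1P_of_card_le_two
      have := Finset.card_lt_card hT
      omega
  refine ⟨m * m, Finset.univ.image (Row m), ?_, hmcs, ?_⟩
  · rw [Finset.card_image_of_injective _ row_injective, Finset.card_univ, Fintype.card_fin]
  have hset : {S : Finset (Finset (Fin (m * m))) | S ⊆ Finset.univ.image (Row m) ∧ IsMCS S}
      = ↑((Finset.univ.image (Row m)).powersetCard 3) := by
    ext S
    simp only [Set.mem_setOf_eq, Finset.mem_coe, Finset.mem_powersetCard]
    constructor
    · rintro ⟨hSR, hne, hnc1p, hmin⟩
      refine ⟨hSR, ?_⟩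
      by_contra hcard
      rcases lt_or_gt_of_ne hcard with hlt | hgt
      · exact hnc1p (isC1P_of_card_le_two S (by omega))
      · obtain ⟨T, hTS, hT3⟩ := Finset.exists_subset_card_eq (show 3 ≤ S.card by omega)
        have hTss : T ⊂ S := hTS.ssubset_of_ne (by rintro rfl; omega)
        exact (hmcs T (hTS.trans hSR) hT3).2.1 (hmin T hTss)
    · rintro ⟨hSR, hS3⟩
      exact ⟨hSR, hmcs S hSR hS3⟩
  rw [hset, Set.ncard_coe_finset, Finset.card_powersetCard,
    Finset.card_image_of_injective _ row_injective, Finset.card_univ, Fintype.card_fin]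
end
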